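/- Let m > 0, let h ∈ 𝒮(ℝ³;ℂ), let a ∈ ℝ³ with a ≠ 0, and let R > 0. Define f : [0,∞) → ℝ by f(s) := (sin(Rs) − Rs·cos(Rs))/s³ for s > 0 and f(0) := R³/3, and set E(p) := √(m² + ‖p‖²). Then the double integrals I_j := ∫_{ℝ³}∫_{ℝ³} conj(h(q − j·a)) · h(p − j·a) · f(‖p − q‖) · (⟨p,q⟩ + m² − E(p)E(q)) / (E(p)E(q)) dp dq (which converge absolutely for each j ∈ ℕ) satisfy I_j → 0 as j → ∞. -/

import Mathlib

/- STATEMENT 9: vanishing of the Newton–Wigner/Terno deformation term on boosted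
   localizing states: the absolutely convergent double integrals
   I_j = ∬ conj(h(q−ja)) h(p−ja) f(‖p−q‖) (⟨p,q⟩+m²−E(p)E(q))/(E(p)E(q)) dp dq
   tend to 0 as j → ∞. -/

set_option maxHeartbeats 1000000

noncomputable section

open MeasureTheory SchwartzMap Real
open scoped RealInnerProductSpace

abbrev Space3 := EuclideanSpace ℝ (Fin 3)

/-- The relativistic energy `E(p) = √(m² + ‖p‖²)`. -/
def relEnergy (m : ℝ) (p : Space3) : ℝ := Real.sqrt (m ^ 2 + ‖p‖ ^ 2)

/-- `f(s) = (sin(Rs) − Rs·cos(Rs))/s³` for `s > 0`, `f(0) = R³/3`: up to a constant,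
the Fourier transform of the indicator of the ball of radius `R`. -/
def ballFT (R : ℝ) (s : ℝ) : ℝ :=
  if s = 0 then R ^ 3 / 3 else (Real.sin (R * s) - R * s * Real.cos (R * s)) / s ^ 3

/-- The integrand of `I_j`. -/
def deformationIntegrand (m : ℝ) (h : 𝓢(Space3, ℂ)) (a : Space3) (R : ℝ) (j : ℕ)
    (z : Space3 × Space3) : ℂ :=
  (starRingEnd ℂ) (h (z.2 - (j : ℝ) • a)) * h (z.1 - (j : ℝ) • a)
    * ((ballFT R ‖z.1 - z.2‖ : ℝ) : ℂ)
    * (((⟪z.1, z.2⟫ + m ^ 2 - relEnergy m z.1 * relEnergy m z.2)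
        / (relEnergy m z.1 * relEnergy m z.2) : ℝ) : ℂ)

namespace DeformationAux

open Filter

instance : ((volume : Measure Space3).prod (volume : Measure Space3)).IsAddRightInvariant :=
  Measure.prod.instIsAddRightInvariant

/-- The deformation factor. -/
def Fm (m : ℝ) (x y : Space3) : ℝ :=
  (⟪x, y⟫ + m ^ 2 - relEnergy m x * relEnergy m y) / (relEnergy m x * relEnergy m y)

/-- The shifted integrand. -/
def Gfun (m : ℝ) (h : 𝓢(Space3, ℂ)) (a : Space3) (R : ℝ) (j : ℕ)
    (z : Space3 × Space3) : ℂ :=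
  (starRingEnd ℂ) (h z.2) * h z.1 * ((ballFT R ‖z.1 - z.2‖ : ℝ) : ℂ)
    * ((Fm m (z.1 + (j : ℝ) • a) (z.2 + (j : ℝ) • a) : ℝ) : ℂ)

lemma hasDerivAt_g (c v : ℝ) :
    HasDerivAt (fun v : ℝ => v ^ 3 / 3 - c * (Real.sin v - v * Real.cos v))
      (v ^ 2 - c * (v * Real.sin v)) v := by
  have h1 : HasDerivAt (fun v : ℝ => v ^ 3 / 3) (v ^ 2) v := by
    have := (hasDerivAt_pow 3 v).div_const 3
    simpa using this
  have h2 : HasDerivAt (fun v : ℝ => Real.sin v - v * Real.cos v) (v * Real.sin v) v := by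
    have hs := Real.hasDerivAt_sin v
    have hc := (hasDerivAt_id v).mul (Real.hasDerivAt_cos v)
    have := hs.sub hc
    refine this.congr_deriv ?_
    simp only [id]; ring
  have := h1.sub (h2.const_mul c)
  exact this

lemma aux_le (c : ℝ) (hc : |c| ≤ 1) (u : ℝ) (hu : 0 ≤ u) :
    c * (Real.sin u - u * Real.cos u) ≤ u ^ 3 / 3 := by
  set g : ℝ → ℝ := fun v => v ^ 3 / 3 - c * (Real.sin v - v * Real.cos v) with hg
  have mono : MonotoneOn g (Set.Ici (0 : ℝ)) := by
    apply monotoneOn_of_deriv_nonneg (convex_Ici 0)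
    · exact Continuous.continuousOn (by continuity)
    · intro v hv
      exact (hasDerivAt_g c v).differentiableAt.differentiableWithinAt
    · intro v hv
      rw [(hasDerivAt_g c v).deriv]
      have hv0 : (0 : ℝ) ≤ v := le_of_lt (by simpa using hv)
      have hsin : |Real.sin v| ≤ v := Real.abs_sin_le_abs.trans_eq (abs_of_nonneg hv0)
      have habs : |c * (v * Real.sin v)| ≤ v ^ 2 := by
        rw [abs_mul, abs_mul, abs_of_nonneg hv0]
        calc |c| * (v * |Real.sin v|)
            ≤ 1 * (v * v) := by
              apply mul_le_mul hc (mul_le_mul_of_nonneg_left hsin hv0) (by positivity)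
                zero_le_one
          _ = v ^ 2 := by ring
      have := (abs_le.1 habs).2
      linarith
  have h0 : g 0 = 0 := by simp [hg]
  have := mono (Set.self_mem_Ici) (Set.mem_Ici.2 hu) hu
  rw [h0] at this
  simp only [hg] at this
  linarith

lemma abs_sin_sub_le (u : ℝ) (hu : 0 ≤ u) :
    |Real.sin u - u * Real.cos u| ≤ u ^ 3 / 3 := by
  rw [abs_le]
  constructor
  · have := aux_le (-1) (by norm_num) u hu
    linarith
  · have := aux_le 1 (by norm_num) u hu
    linarith

lemma abs_ballFT_le (R : ℝ) (hR : 0 < R) (s : ℝ) (hs : 0 ≤ s) :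
    |ballFT R s| ≤ R ^ 3 / 3 := by
  unfold ballFT
  split_ifs with h
  · rw [abs_of_nonneg (by positivity)]
  · have hs' : 0 < s := lt_of_le_of_ne hs (Ne.symm h)
    rw [abs_div, abs_of_nonneg (by positivity : (0:ℝ) ≤ s ^ 3), div_le_iff₀ (by positivity)]
    calc |Real.sin (R * s) - R * s * Real.cos (R * s)| ≤ (R * s) ^ 3 / 3 :=
          abs_sin_sub_le (R * s) (by positivity)
      _ = R ^ 3 / 3 * s ^ 3 := by ring

lemma relEnergy_pos {m : ℝ} (hm : 0 < m) (p : Space3) : 0 < relEnergy m p :=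
  Real.sqrt_pos.2 (add_pos_of_pos_of_nonneg (pow_pos hm 2) (sq_nonneg _))

lemma sq_relEnergy (m : ℝ) (p : Space3) : relEnergy m p ^ 2 = m ^ 2 + ‖p‖ ^ 2 :=
  Real.sq_sqrt (add_nonneg (sq_nonneg _) (sq_nonneg _))

lemma num_abs_le {m : ℝ} (hm : 0 < m) (x y : Space3) :
    |⟪x, y⟫ + m ^ 2| ≤ relEnergy m x * relEnergy m y := by
  have hEx := relEnergy_pos hm x
  have hEy := relEnergy_pos hm y
  have hx := sq_relEnergy m x
  have hy := sq_relEnergy m y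
  have h1 : (‖x‖ * ‖y‖ + m ^ 2) ^ 2 ≤ (relEnergy m x * relEnergy m y) ^ 2 := by
    rw [mul_pow, hx, hy]
    nlinarith [sq_nonneg (‖x‖ - ‖y‖), sq_nonneg m, norm_nonneg x, norm_nonneg y]
  have h2 : ‖x‖ * ‖y‖ + m ^ 2 ≤ relEnergy m x * relEnergy m y := by
    nlinarith [mul_pos hEx hEy, mul_nonneg (norm_nonneg x) (norm_nonneg y), sq_nonneg m]
  calc |⟪x, y⟫ + m ^ 2| ≤ |⟪x, y⟫| + |m ^ 2| := abs_add_le _ _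
    _ = |⟪x, y⟫| + m ^ 2 := by rw [abs_of_nonneg (sq_nonneg m)]
    _ ≤ ‖x‖ * ‖y‖ + m ^ 2 := by linarith [abs_real_inner_le_norm x y]
    _ ≤ relEnergy m x * relEnergy m y := h2

lemma abs_Fm_le_two {m : ℝ} (hm : 0 < m) (x y : Space3) : |Fm m x y| ≤ 2 := by
  have hD : 0 < relEnergy m x * relEnergy m y :=
    mul_pos (relEnergy_pos hm x) (relEnergy_pos hm y)
  rw [Fm, abs_div, abs_of_pos hD, div_le_iff₀ hD]
  have hN := abs_le.1 (num_abs_le hm x y)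
  rw [abs_le]
  constructor <;> [linarith [hN.1]; linarith [hN.2]]

lemma abs_Fm_le_decay {m : ℝ} (hm : 0 < m) (x y : Space3)
    (hxy : ‖x - y‖ ≤ ‖x‖) (hy : 0 < ‖y‖) :
    |Fm m x y| ≤ ‖x - y‖ ^ 2 / ‖y‖ ^ 2 := by
  set X := ‖x‖ with hX
  set Y := ‖y‖ with hY
  set U := ‖x - y‖ with hU
  set t := (⟪x, y⟫ : ℝ) with ht
  set D := relEnergy m x * relEnergy m y with hD
  set N := t + m ^ 2 with hN
  have hDpos : 0 < D := mul_pos (relEnergy_pos hm x) (relEnergy_pos hm y)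
  have hU2 : U ^ 2 = X ^ 2 - 2 * t + Y ^ 2 := by
    rw [hU, hX, hY, ht, norm_sub_sq_real]
  have hD2 : D ^ 2 = (m ^ 2 + X ^ 2) * (m ^ 2 + Y ^ 2) := by
    rw [hD, mul_pow, sq_relEnergy, sq_relEnergy]
  have hUX : U ^ 2 ≤ X ^ 2 := by
    apply pow_le_pow_left₀ (norm_nonneg _) hxy
  have hN0 : 0 ≤ N := by
    have hy2 : 0 ≤ Y ^ 2 := sq_nonneg _
    nlinarith [sq_nonneg m]
  have hdiff : D ^ 2 - N ^ 2 ≤ (m ^ 2 + X ^ 2) * U ^ 2 := by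
    have htval : t = (X ^ 2 + Y ^ 2 - U ^ 2) / 2 := by linarith
    have hid : D ^ 2 - N ^ 2 = (m ^ 2 + X ^ 2) * U ^ 2
        - (X ^ 2 - (X ^ 2 + Y ^ 2 - U ^ 2) / 2) ^ 2 := by
      rw [hD2, hN, htval]
      have hYval : Y ^ 2 = U ^ 2 - X ^ 2 + 2 * ((X ^ 2 + Y ^ 2 - U ^ 2) / 2) := by ring
      rw [hYval]
      ring
    rw [hid]
    nlinarith [sq_nonneg (X ^ 2 - (X ^ 2 + Y ^ 2 - U ^ 2) / 2)]
  have hD2ge : (m ^ 2 + X ^ 2) * Y ^ 2 ≤ D ^ 2 := by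
    rw [hD2]
    have h1 : Y ^ 2 ≤ m ^ 2 + Y ^ 2 := by nlinarith [sq_nonneg m]
    have h2 : (0:ℝ) ≤ m ^ 2 + X ^ 2 := by positivity
    exact mul_le_mul_of_nonneg_left h1 h2
  have hND : N ≤ D := (le_abs_self N).trans (num_abs_le hm x y)
  have hFm : Fm m x y = (N - D) / D := by rw [Fm, hN, ht, hD]
  rw [hFm, abs_div, abs_of_pos hDpos, abs_of_nonpos (by linarith), neg_sub,
    div_le_div_iff₀ hDpos (by positivity : (0:ℝ) < Y ^ 2)]
  -- goal : (D - N) * Y ^ 2 ≤ U ^ 2 * D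
  have step1 : (D - N) * Y ^ 2 * D ≤ U ^ 2 * D ^ 2 := by
    calc (D - N) * Y ^ 2 * D ≤ (D - N) * Y ^ 2 * (D + N) := by
          apply mul_le_mul_of_nonneg_left (by linarith)
            (mul_nonneg (by linarith) (sq_nonneg _))
      _ = (D ^ 2 - N ^ 2) * Y ^ 2 := by ring
      _ ≤ ((m ^ 2 + X ^ 2) * U ^ 2) * Y ^ 2 :=
          mul_le_mul_of_nonneg_right hdiff (sq_nonneg _)
      _ = U ^ 2 * ((m ^ 2 + X ^ 2) * Y ^ 2) := by ring
      _ ≤ U ^ 2 * D ^ 2 := mul_le_mul_of_nonneg_left hD2ge (sq_nonneg _)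
  nlinarith [step1, hDpos]

lemma norm_tendsto (a : Space3) (ha : a ≠ 0) (r : Space3) :
    Tendsto (fun j : ℕ => ‖r + (j : ℝ) • a‖) atTop atTop := by
  have hna : 0 < ‖a‖ := norm_pos_iff.2 ha
  have hlow : Tendsto (fun j : ℕ => (j : ℝ) * ‖a‖ + -‖r‖) atTop atTop :=
    tendsto_atTop_add_const_right _ _
      (Tendsto.atTop_mul_const hna tendsto_natCast_atTop_atTop)
  apply tendsto_atTop_mono _ hlow
  intro j
  have h1 : ‖(j : ℝ) • a‖ = (j : ℝ) * ‖a‖ := by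
    rw [norm_smul, Real.norm_eq_abs, abs_of_nonneg (Nat.cast_nonneg j)]
  have h2 := norm_sub_norm_le ((j : ℝ) • a) (-r)
  rw [norm_neg, sub_neg_eq_add, h1] at h2
  calc (j : ℝ) * ‖a‖ + -‖r‖ ≤ ‖(j : ℝ) • a + r‖ := by linarith
    _ = ‖r + (j : ℝ) • a‖ := by rw [add_comm]

lemma tendsto_Fm {m : ℝ} (hm : 0 < m) (a : Space3) (ha : a ≠ 0) (p q : Space3) :
    Tendsto (fun j : ℕ => Fm m (p + (j : ℝ) • a) (q + (j : ℝ) • a)) atTop (nhds 0) := by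
  have hx := norm_tendsto a ha p
  have hy := norm_tendsto a ha q
  have hev1 : ∀ᶠ j : ℕ in atTop, ‖p - q‖ ≤ ‖p + (j : ℝ) • a‖ := hx.eventually_ge_atTop _
  have hev2 : ∀ᶠ j : ℕ in atTop, 1 ≤ ‖q + (j : ℝ) • a‖ := hy.eventually_ge_atTop 1
  apply squeeze_zero_norm'
    (a := fun j : ℕ => ‖p - q‖ ^ 2 / ‖q + (j : ℝ) • a‖ ^ 2)
  · filter_upwards [hev1, hev2] with j h1 h2
    have hsub : (p + (j : ℝ) • a) - (q + (j : ℝ) • a) = p - q := by abel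
    have := abs_Fm_le_decay hm (p + (j : ℝ) • a) (q + (j : ℝ) • a)
      (by rw [hsub]; exact h1) (by linarith)
    rw [hsub] at this
    simpa [Real.norm_eq_abs] using this
  · apply Tendsto.div_atTop (tendsto_const_nhds)
    have : Tendsto (fun j : ℕ => ‖q + (j : ℝ) • a‖ * ‖q + (j : ℝ) • a‖) atTop atTop :=
      Tendsto.atTop_mul_atTop₀ hy hy
    simpa [pow_two] using this

lemma continuous_relEnergy (m : ℝ) : Continuous (relEnergy m) :=
  Real.continuous_sqrt.comp (continuous_const.add (continuous_norm.pow 2))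

lemma measurable_ballFT (R : ℝ) : Measurable (ballFT R) := by
  unfold ballFT
  refine Measurable.ite ?_ measurable_const ?_
  · simpa [Set.setOf_eq_eq_singleton] using measurableSet_singleton (0 : ℝ)
  · apply Measurable.div
    · exact ((Real.continuous_sin.comp (continuous_const.mul continuous_id)).sub
        ((continuous_const.mul continuous_id).mul
          (Real.continuous_cos.comp (continuous_const.mul continuous_id)))).measurable
    · exact (continuous_pow 3).measurable

lemma measurable_Fm (m : ℝ) :
    Measurable fun z : Space3 × Space3 => Fm m z.1 z.2 := by
  have hE : Continuous fun z : Space3 × Space3 => relEnergy m z.1 * relEnergy m z.2 :=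
    ((continuous_relEnergy m).comp continuous_fst).mul
      ((continuous_relEnergy m).comp continuous_snd)
  have hNum : Continuous fun z : Space3 × Space3 =>
      (⟪z.1, z.2⟫ : ℝ) + m ^ 2 - relEnergy m z.1 * relEnergy m z.2 :=
    ((Continuous.inner continuous_fst continuous_snd).add continuous_const).sub hE
  exact hNum.measurable.div hE.measurable

lemma measurable_ballFT_part (R : ℝ) :
    Measurable fun z : Space3 × Space3 => ballFT R ‖z.1 - z.2‖ :=
  (measurable_ballFT R).comp (continuous_norm.comp (continuous_fst.sub continuous_snd)).measurable

lemma measurable_Fm_shift (m : ℝ) (c : Space3) :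
    Measurable fun z : Space3 × Space3 => Fm m (z.1 + c) (z.2 + c) := by
  unfold Fm
  have hE : Continuous fun z : Space3 × Space3 =>
      relEnergy m (z.1 + c) * relEnergy m (z.2 + c) :=
    ((continuous_relEnergy m).comp (continuous_fst.add continuous_const)).mul
      ((continuous_relEnergy m).comp (continuous_snd.add continuous_const))
  have hNum : Continuous fun z : Space3 × Space3 =>
      (⟪z.1 + c, z.2 + c⟫ : ℝ) + m ^ 2 - relEnergy m (z.1 + c) * relEnergy m (z.2 + c) :=
    ((Continuous.inner (continuous_fst.add continuous_const)
      (continuous_snd.add continuous_const)).add continuous_const).sub hE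
  exact hNum.measurable.div hE.measurable

lemma aesm_G (m : ℝ) (h : 𝓢(Space3, ℂ)) (a : Space3) (R : ℝ) (j : ℕ) :
    AEStronglyMeasurable (Gfun m h a R j) (volume : Measure (Space3 × Space3)) := by
  apply Measurable.aestronglyMeasurable
  have h1 : Measurable fun z : Space3 × Space3 => (starRingEnd ℂ) (h z.2) :=
    (Complex.continuous_conj.comp (h.continuous.comp continuous_snd)).measurable
  have h2 : Measurable fun z : Space3 × Space3 => h z.1 :=
    (h.continuous.comp continuous_fst).measurable
  have h3 : Measurable fun z : Space3 × Space3 => ((ballFT R ‖z.1 - z.2‖ : ℝ) : ℂ) :=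
    Complex.measurable_ofReal.comp (measurable_ballFT_part R)
  have h4 : Measurable fun z : Space3 × Space3 =>
      ((Fm m (z.1 + (j : ℝ) • a) (z.2 + (j : ℝ) • a) : ℝ) : ℂ) :=
    Complex.measurable_ofReal.comp (measurable_Fm_shift m ((j : ℝ) • a))
  unfold Gfun
  exact ((h1.mul h2).mul h3).mul h4

lemma norm_G_le (m : ℝ) (hm : 0 < m) (h : 𝓢(Space3, ℂ)) (a : Space3) (R : ℝ) (hR : 0 < R)
    (j : ℕ) (z : Space3 × Space3) :
    ‖Gfun m h a R j z‖ ≤ 2 * (R ^ 3 / 3) * (‖h z.1‖ * ‖h z.2‖) := by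
  rw [Gfun, norm_mul, norm_mul, norm_mul]
  have e1 : ‖(starRingEnd ℂ) (h z.2)‖ = ‖h z.2‖ := by simp
  have e2 : ‖((ballFT R ‖z.1 - z.2‖ : ℝ) : ℂ)‖ = |ballFT R ‖z.1 - z.2‖| := by
    simp [Complex.norm_real, Real.norm_eq_abs]
  have e3 : ‖((Fm m (z.1 + (j : ℝ) • a) (z.2 + (j : ℝ) • a) : ℝ) : ℂ)‖
      = |Fm m (z.1 + (j : ℝ) • a) (z.2 + (j : ℝ) • a)| := by
    simp [Complex.norm_real, Real.norm_eq_abs]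
  rw [e1, e2, e3]
  have b1 : |ballFT R ‖z.1 - z.2‖| ≤ R ^ 3 / 3 := abs_ballFT_le R hR _ (norm_nonneg _)
  have b2 : |Fm m (z.1 + (j : ℝ) • a) (z.2 + (j : ℝ) • a)| ≤ 2 := abs_Fm_le_two hm _ _
  calc ‖h z.2‖ * ‖h z.1‖ * |ballFT R ‖z.1 - z.2‖|
        * |Fm m (z.1 + (j : ℝ) • a) (z.2 + (j : ℝ) • a)|
      ≤ ‖h z.2‖ * ‖h z.1‖ * (R ^ 3 / 3) * 2 := by gcongr <;> positivity
    _ = 2 * (R ^ 3 / 3) * (‖h z.1‖ * ‖h z.2‖) := by ring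

lemma deformation_eq_shift (m : ℝ) (h : 𝓢(Space3, ℂ)) (a : Space3) (R : ℝ) (j : ℕ)
    (z : Space3 × Space3) :
    deformationIntegrand m h a R j (z + (((j : ℝ) • a, (j : ℝ) • a) : Space3 × Space3))
      = Gfun m h a R j z := by
  have e1 : (z + (((j : ℝ) • a, (j : ℝ) • a) : Space3 × Space3)).1 = z.1 + (j : ℝ) • a := rfl
  have e2 : (z + (((j : ℝ) • a, (j : ℝ) • a) : Space3 × Space3)).2 = z.2 + (j : ℝ) • a := rfl
  rw [deformationIntegrand, Gfun, Fm, e1, e2]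
  have e3 : z.1 + (j : ℝ) • a - (j : ℝ) • a = z.1 := by abel
  have e4 : z.2 + (j : ℝ) • a - (j : ℝ) • a = z.2 := by abel
  have e5 : z.1 + (j : ℝ) • a - (z.2 + (j : ℝ) • a) = z.1 - z.2 := by abel
  rw [e3, e4, e5]

end DeformationAux

open DeformationAux Filter

theorem deformation_term_vanishes
    (m : ℝ) (hm : 0 < m) (h : 𝓢(Space3, ℂ)) (a : Space3) (ha : a ≠ 0)
    (R : ℝ) (hR : 0 < R) :
    (∀ j : ℕ, Integrable (deformationIntegrand m h a R j) (volume : Measure (Space3 × Space3))) ∧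
    Filter.Tendsto
      (fun j : ℕ => ∫ z : Space3 × Space3, deformationIntegrand m h a R j z)
      Filter.atTop (nhds 0) := by
  classical
  have hdeform : ∀ j z, deformationIntegrand m h a R j z =
      (starRingEnd ℂ) (h (z.2 - (j : ℝ) • a)) * h (z.1 - (j : ℝ) • a)
        * ((ballFT R ‖z.1 - z.2‖ : ℝ) : ℂ) * ((Fm m z.1 z.2 : ℝ) : ℂ) := fun j z => rfl
  -- measurability
  have hmeasj : ∀ j : ℕ, AEStronglyMeasurable (deformationIntegrand m h a R j)
      (volume : Measure (Space3 × Space3)) := by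
    intro j
    apply Measurable.aestronglyMeasurable
    have h1 : Measurable fun z : Space3 × Space3 =>
        (starRingEnd ℂ) (h (z.2 - (j : ℝ) • a)) :=
      (Complex.continuous_conj.comp
        (h.continuous.comp (continuous_snd.sub continuous_const))).measurable
    have h2 : Measurable fun z : Space3 × Space3 => h (z.1 - (j : ℝ) • a) :=
      (h.continuous.comp (continuous_fst.sub continuous_const)).measurable
    have h3 : Measurable fun z : Space3 × Space3 => ((ballFT R ‖z.1 - z.2‖ : ℝ) : ℂ) :=
      Complex.measurable_ofReal.comp (measurable_ballFT_part R)
    have h4 : Measurable fun z : Space3 × Space3 => ((Fm m z.1 z.2 : ℝ) : ℂ) :=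
      Complex.measurable_ofReal.comp (measurable_Fm m)
    have heq : deformationIntegrand m h a R j = fun z : Space3 × Space3 =>
        (starRingEnd ℂ) (h (z.2 - (j : ℝ) • a)) * h (z.1 - (j : ℝ) • a)
          * ((ballFT R ‖z.1 - z.2‖ : ℝ) : ℂ) * ((Fm m z.1 z.2 : ℝ) : ℂ) := funext (hdeform j)
    rw [heq]
    exact ((h1.mul h2).mul h3).mul h4
  -- the pointwise bound
  have hbound : ∀ (j : ℕ) (z : Space3 × Space3),
      ‖deformationIntegrand m h a R j z‖
        ≤ 2 * (R ^ 3 / 3) * (‖h (z.1 - (j : ℝ) • a)‖ * ‖h (z.2 - (j : ℝ) • a)‖) := by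
    intro j z
    rw [hdeform]
    rw [norm_mul, norm_mul, norm_mul]
    have e1 : ‖(starRingEnd ℂ) (h (z.2 - (j : ℝ) • a))‖ = ‖h (z.2 - (j : ℝ) • a)‖ := by
      simp
    have e2 : ‖((ballFT R ‖z.1 - z.2‖ : ℝ) : ℂ)‖ = |ballFT R ‖z.1 - z.2‖| := by
      simp [Complex.norm_real, Real.norm_eq_abs]
    have e3 : ‖((Fm m z.1 z.2 : ℝ) : ℂ)‖ = |Fm m z.1 z.2| := by
      simp [Complex.norm_real, Real.norm_eq_abs]
    rw [e1, e2, e3]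
    have b1 : |ballFT R ‖z.1 - z.2‖| ≤ R ^ 3 / 3 := abs_ballFT_le R hR _ (norm_nonneg _)
    have b2 : |Fm m z.1 z.2| ≤ 2 := abs_Fm_le_two hm z.1 z.2
    calc ‖h (z.2 - (j : ℝ) • a)‖ * ‖h (z.1 - (j : ℝ) • a)‖ * |ballFT R ‖z.1 - z.2‖|
          * |Fm m z.1 z.2|
        ≤ ‖h (z.2 - (j : ℝ) • a)‖ * ‖h (z.1 - (j : ℝ) • a)‖ * (R ^ 3 / 3) * 2 := by
          gcongr <;> positivity
      _ = 2 * (R ^ 3 / 3) * (‖h (z.1 - (j : ℝ) • a)‖ * ‖h (z.2 - (j : ℝ) • a)‖) := by ring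
  -- the dominating functions
  have hdom : Integrable (fun z : Space3 × Space3 => 2 * (R ^ 3 / 3) * (‖h z.1‖ * ‖h z.2‖))
      (volume : Measure (Space3 × Space3)) := by
    rw [Measure.volume_eq_prod]
    exact (h.integrable.norm.mul_prod h.integrable.norm).const_mul _
  have hdomj : ∀ j : ℕ, Integrable
      (fun z : Space3 × Space3 =>
        2 * (R ^ 3 / 3) * (‖h (z.1 - (j : ℝ) • a)‖ * ‖h (z.2 - (j : ℝ) • a)‖))
      (volume : Measure (Space3 × Space3)) := by
    intro j
    rw [Measure.volume_eq_prod]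
    exact ((h.integrable.norm.comp_sub_right _).mul_prod
      (h.integrable.norm.comp_sub_right _)).const_mul _
  have hint : ∀ j : ℕ, Integrable (deformationIntegrand m h a R j)
      (volume : Measure (Space3 × Space3)) := by
    intro j
    exact (hdomj j).mono' (hmeasj j) (Filter.Eventually.of_forall (hbound j))
  refine ⟨hint, ?_⟩
  have hshift : ∀ j : ℕ,
      (∫ z : Space3 × Space3, deformationIntegrand m h a R j z)
        = ∫ z : Space3 × Space3, Gfun m h a R j z := by
    intro j
    rw [Measure.volume_eq_prod, ← integral_add_right_eq_self
      (μ := (volume : Measure Space3).prod volume) (deformationIntegrand m h a R j)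
      (((j : ℝ) • a, (j : ℝ) • a))]
    congr 1
    funext z
    exact deformation_eq_shift m h a R j z
  simp only [hshift]
  have h0 : (nhds (0 : ℂ)) = nhds (∫ _z : Space3 × Space3, (0 : ℂ)) := by simp
  rw [h0]
  apply tendsto_integral_of_dominated_convergence
    (fun z : Space3 × Space3 => 2 * (R ^ 3 / 3) * (‖h z.1‖ * ‖h z.2‖))
  · intro j
    exact aesm_G m h a R j
  · exact hdom
  · intro j
    exact Filter.Eventually.of_forall (norm_G_le m hm h a R hR j)
  · apply Filter.Eventually.of_forall
    intro z
    have hFm := tendsto_Fm hm a ha z.1 z.2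
    have hFmC : Tendsto (fun j : ℕ =>
        ((Fm m (z.1 + (j : ℝ) • a) (z.2 + (j : ℝ) • a) : ℝ) : ℂ)) atTop (nhds 0) := by
      have := (Complex.continuous_ofReal.tendsto 0).comp hFm
      exact this
    have := hFmC.const_mul
      ((starRingEnd ℂ) (h z.2) * h z.1 * ((ballFT R ‖z.1 - z.2‖ : ℝ) : ℂ))
    simpa [Gfun, mul_assoc] using this
  -- measurability instance side conditions, if any, are handled above

end
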